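/- Let p ≡ 1 (mod 3) be a rational prime, write p = π·π̄ with π an Eisenstein prime, and let E be an Eisenstein integer coprime to p. Then (E/p)₃ ≡ (E/Ē)^{(p-1)/3} (mod π), where Ē is the complex conjugate of E and (E/p)₃ = (E/π)₃·(E/π̄)₃. -/

import Mathlib

open Polynomial

noncomputable section

/-- The Eisenstein integers `ℤ[ω] = ℤ[X]/(X² + X + 1)`. -/
abbrev Eis : Type := AdjoinRoot (X ^ 2 + X + 1 : ℤ[X])

/-- The primitive cube root of unity `ω` in `ℤ[ω]`. -/
noncomputable def eisω : Eis := AdjoinRoot.root _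

/-- The norm `ℤ[ω] → ℤ`. -/
noncomputable def eisNorm : Eis →* ℤ := Algebra.norm ℤ

/-- A cubic residue symbol `χ β α = (β/α)₃` on the Eisenstein integers: it is
multiplicative in the denominator, equals `1` on unit denominators, and for an
Eisenstein prime `π ∤ 3` it is the unique value in `{1, ω, ω²}` congruent to
`β^{(N(π)-1)/3}` mod `π` (and `0` when `π ∣ β`). -/
structure IsCubicSymbol (χ : Eis → Eis → Eis) : Prop where
  prime_value : ∀ β π : Eis, Prime π → ¬ π ∣ 3 → ¬ π ∣ β →
    χ β π ∈ ({1, eisω, eisω ^ 2} : Set Eis) ∧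
      π ∣ (χ β π - β ^ (((eisNorm π).natAbs - 1) / 3))
  prime_zero : ∀ β π : Eis, Prime π → ¬ π ∣ 3 → π ∣ β → χ β π = 0
  unit_denom : ∀ β u : Eis, IsUnit u → χ β u = 1
  mul_denom : ∀ β π₁ π₂ : Eis, χ β (π₁ * π₂) = χ β π₁ * χ β π₂

lemma eisω_sq : eisω ^ 2 + eisω + 1 = 0 := by
  have h := AdjoinRoot.eval₂_root (X ^ 2 + X + 1 : ℤ[X])
  simpa [eisω] using h

/-- Complex conjugation on the Eisenstein integers, sending `ω` to `ω² = -1 - ω`. -/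
noncomputable def eisConj : Eis →+* Eis :=
  AdjoinRoot.lift (Int.castRingHom Eis) (-1 - eisω) (by
    simp only [eval₂_add, eval₂_pow, eval₂_X, eval₂_one]
    linear_combination eisω_sq)


lemma eis_monic : (X ^ 2 + X + 1 : ℤ[X]).Monic := by monicity!

lemma eis_natDegree : (X ^ 2 + X + 1 : ℤ[X]).natDegree = 2 := by compute_degree!

lemma eisConj_ω : eisConj eisω = -1 - eisω := AdjoinRoot.lift_root _

lemma eisConj_conj (x : Eis) : eisConj (eisConj x) = x := by
  have : (eisConj.toIntAlgHom.comp eisConj.toIntAlgHom) = AlgHom.id ℤ Eis := by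
    apply AdjoinRoot.algHom_ext
    show eisConj (eisConj eisω) = eisω
    rw [eisConj_ω, map_sub, map_neg, map_one, eisConj_ω]
    ring
  exact congrArg (· x) (congrArg DFunLike.coe this)

noncomputable def eisConjAlg : Eis ≃ₐ[ℤ] Eis :=
  AlgEquiv.ofAlgHom eisConj.toIntAlgHom eisConj.toIntAlgHom
    (AlgHom.ext eisConj_conj) (AlgHom.ext eisConj_conj)

lemma eisNorm_conj (x : Eis) : eisNorm (eisConj x) = eisNorm x :=
  Algebra.norm_eq_of_algEquiv eisConjAlg x

lemma eisNorm_int (n : ℤ) : eisNorm ((n : ℤ) : Eis) = n ^ 2 := by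
  have := Algebra.norm_algebraMap_of_basis (AdjoinRoot.powerBasis' eis_monic).basis n
  simpa [eisNorm, eis_natDegree] using this

lemma eisω_cube : eisω ^ 3 = 1 := by linear_combination (eisω - 1) * eisω_sq

lemma eisConj_ω' : eisConj eisω = eisω ^ 2 := by
  rw [eisConj_ω]; linear_combination -eisω_sq

/-- Let `p ≡ 1 (mod 3)` be a rational prime with `p = π·π̄` for an Eisenstein prime
`π`, and let `E` be an Eisenstein integer coprime to `p`.  Then
`(E/p)₃ ≡ (E/Ē)^{(p-1)/3} (mod π)`, where `(E/p)₃ = (E/π)₃·(E/π̄)₃`. -/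
theorem stmt_11 (χ : Eis → Eis → Eis) (hχ : IsCubicSymbol χ)
    (p : ℕ) (hp : p.Prime) (hp3 : p % 3 = 1)
    (π : Eis) (hπ : Prime π) (hfac : (p : Eis) = π * eisConj π)
    (E : Eis) (hE : IsCoprime E (p : Eis)) :
    π ∣ (χ E π * χ E (eisConj π)) * (eisConj E) ^ ((p - 1) / 3) - E ^ ((p - 1) / 3) := by
  -- norms
  have hnp : eisNorm ((p : Eis)) = (p : ℤ) ^ 2 := by
    have := eisNorm_int (p : ℤ); simpa using this
  have hprod : eisNorm π * eisNorm (eisConj π) = (p : ℤ) ^ 2 := by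
    rw [← hnp, hfac, map_mul]
  have hnconj : eisNorm (eisConj π) = eisNorm π := eisNorm_conj π
  have hsq : (eisNorm π) ^ 2 = (p : ℤ) ^ 2 := by rw [sq, ← hnconj]; nth_rewrite 1 [← hnconj] at hprod; linarith [hprod]
  have hnatAbs : (eisNorm π).natAbs = p := by
    have h1 : (eisNorm π).natAbs ^ 2 = p ^ 2 := by
      have := congrArg Int.natAbs hsq
      simpa [Int.natAbs_pow] using this
    exact Nat.pow_left_injective (by norm_num) h1
  have hnatAbs' : (eisNorm (eisConj π)).natAbs = p := by rw [hnconj, hnatAbs]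
  -- coprimality facts
  have hπp : π ∣ (p : Eis) := ⟨eisConj π, hfac⟩
  have hπbp : eisConj π ∣ (p : Eis) := ⟨π, by rw [hfac, mul_comm]⟩
  have hπb : Prime (eisConj π) := (MulEquiv.prime_iff eisConjAlg.toMulEquiv (p := π)).mpr hπ
  have hc3 : IsCoprime (3 : Eis) ((p : Eis)) := by
    have h3 : IsCoprime (3 : ℤ) (p : ℤ) := by
      rw [Int.isCoprime_iff_gcd_eq_one]
      have : ¬ (3 ∣ p) := by omega
      simpa [Int.gcd] using (Nat.coprime_primes (by norm_num) hp).mpr (by omega)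
    have := h3.map (algebraMap ℤ Eis)
    simpa using this
  have hπ3 : ¬ π ∣ 3 := fun h => hπ.not_unit (hc3.isUnit_of_dvd' h hπp)
  have hπb3 : ¬ eisConj π ∣ 3 := fun h => hπb.not_unit (hc3.isUnit_of_dvd' h hπbp)
  have hπE : ¬ π ∣ E := fun h => hπ.not_unit (hE.isUnit_of_dvd' h hπp)
  have hπbE : ¬ eisConj π ∣ E := fun h => hπb.not_unit (hE.isUnit_of_dvd' h hπbp)
  -- symbol values
  obtain ⟨hmem, hdvd⟩ := hχ.prime_value E π hπ hπ3 hπE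
  obtain ⟨hmem', hdvd'⟩ := hχ.prime_value E (eisConj π) hπb hπb3 hπbE
  rw [hnatAbs] at hdvd
  rw [hnatAbs'] at hdvd'
  set m := (p - 1) / 3 with hm
  set a := χ E π with ha
  set b := χ E (eisConj π) with hb
  -- conjugate the second congruence
  have hdvd2 : π ∣ eisConj b - (eisConj E) ^ m := by
    have := map_dvd eisConj hdvd'
    rw [map_sub, map_pow, eisConj_conj] at this
    exact this
  have hb2 : eisConj b = b ^ 2 ∧ b ^ 3 = 1 := by
    simp only [Set.mem_insert_iff, Set.mem_singleton_iff] at hmem'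
    rcases hmem' with h1 | h2 | h3
    · rw [h1]; norm_num
    · rw [h2]; exact ⟨eisConj_ω', eisω_cube⟩
    · rw [h3]
      constructor
      · rw [map_pow, eisConj_ω']
      · calc (eisω ^ 2) ^ 3 = (eisω ^ 3) ^ 2 := by ring
          _ = 1 := by rw [eisω_cube]; ring
  obtain ⟨hb2, hb3⟩ := hb2
  rw [hb2] at hdvd2
  obtain ⟨c₁, hc₁⟩ := hdvd2
  obtain ⟨c₂, hc₂⟩ := hdvd
  exact ⟨-(a * b * c₁) + c₂, by linear_combination (-(a * b)) * hc₁ + hc₂ + a * hb3⟩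

end
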